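/- For every integer d ≥ 3, the ideal I = I_3(G) of ℂ[m_0,…,m_d] generated by the 3×3 minors of the matrix G is a prime ideal. -/

import Mathlib

open MvPolynomial

/-- The `3 × d` matrix `G` of the gamma moment variety: its `c`-th column, for `1 ≤ c ≤ d`,
is `((c-1)·m_{c-1}, m_{c-1}, m_c)ᵀ`.  Columns are indexed by `Fin d`, with `c : Fin d`
corresponding to the paper's column `c + 1`. -/
noncomputable def gammaMatrix (d : ℕ) :
    Matrix (Fin 3) (Fin d) (MvPolynomial (Fin (d + 1)) ℂ) :=
  Matrix.of fun r c =>
    ![C (c.val : ℂ) * X ⟨c.val, by have := c.isLt; omega⟩,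
      X ⟨c.val, by have := c.isLt; omega⟩,
      X ⟨c.val + 1, by have := c.isLt; omega⟩] r

/-- The ideal `I₃(G)` generated by all `3 × 3` minors of `G`, i.e. determinants of
submatrices obtained by choosing `3` of the `d` columns. -/
noncomputable def gammaIdeal (d : ℕ) : Ideal (MvPolynomial (Fin (d + 1)) ℂ) :=
  Ideal.span
    { p | ∃ s : Fin 3 → Fin d, StrictMono s ∧ p = ((gammaMatrix d).submatrix id s).det }

namespace GammaAux

noncomputable section

/-- `pk c = ∏_{i<c} (X + i)` (rising factorial). -/
def pk (c : ℕ) : Polynomial ℂ := ∏ i ∈ Finset.range c, (Polynomial.X + Polynomial.C (i : ℂ))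

lemma pk_succ (c : ℕ) : pk (c + 1) = pk c * (Polynomial.X + Polynomial.C (c : ℂ)) :=
  Finset.prod_range_succ _ _

lemma pk_ne_zero (c : ℕ) : pk c ≠ 0 := by
  apply Finset.prod_ne_zero_iff.mpr
  intro i _
  exact Polynomial.X_add_C_ne_zero _

lemma eval_pk (k c : ℕ) :
    Polynomial.eval (-(k : ℂ)) (pk c) = ∏ i ∈ Finset.range c, ((i : ℂ) - k) := by
  rw [pk, Polynomial.eval_prod]
  refine Finset.prod_congr rfl fun i _ => ?_
  simp [sub_eq_add_neg, add_comm]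

lemma eval_pk_ne_zero {k c : ℕ} (h : c ≤ k) : Polynomial.eval (-(k : ℂ)) (pk c) ≠ 0 := by
  rw [eval_pk]
  apply Finset.prod_ne_zero_iff.mpr
  intro i hi
  rw [Finset.mem_range] at hi
  have : i ≠ k := by omega
  intro hzero
  apply this
  have : (i : ℂ) = k := by linear_combination hzero
  exact_mod_cast this

lemma eval_pk_eq_zero {k c : ℕ} (h : k < c) : Polynomial.eval (-(k : ℂ)) (pk c) = 0 := by
  rw [eval_pk]
  apply Finset.prod_eq_zero (Finset.mem_range.mpr h)
  ring

variable {d : ℕ}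

/-- total degree of an exponent vector -/
def dg (μ : Fin (d + 1) →₀ ℕ) : ℕ := ∑ j, μ j
/-- weight (index-sum) of an exponent vector -/
def wt (μ : Fin (d + 1) →₀ ℕ) : ℕ := ∑ j : Fin (d+1), (j : ℕ) * μ j
/-- quadratic weight -/
def w2 (μ : Fin (d + 1) →₀ ℕ) : ℕ := ∑ j : Fin (d+1), (j : ℕ) ^ 2 * μ j
/-- the product of rising factorials attached to an exponent vector -/
def Pmu (μ : Fin (d + 1) →₀ ℕ) : Polynomial ℂ := ∏ j : Fin (d+1), pk (j : ℕ) ^ μ j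

lemma dg_add (μ ν : Fin (d + 1) →₀ ℕ) : dg (μ + ν) = dg μ + dg ν := by
  simp [dg, Finset.sum_add_distrib]

lemma wt_add (μ ν : Fin (d + 1) →₀ ℕ) : wt (μ + ν) = wt μ + wt ν := by
  simp [wt, mul_add, Finset.sum_add_distrib]

lemma Pmu_add (μ ν : Fin (d + 1) →₀ ℕ) : Pmu (μ + ν) = Pmu μ * Pmu ν := by
  simp [Pmu, pow_add, Finset.prod_mul_distrib]

lemma dg_single (a : Fin (d + 1)) (m : ℕ) : dg (Finsupp.single a m) = m := by
  simp [dg, Finsupp.single_apply, Finset.sum_ite_eq]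

lemma wt_single (a : Fin (d + 1)) (m : ℕ) : wt (Finsupp.single a m) = a * m := by
  simp [wt, Finsupp.single_apply, mul_ite, Finset.sum_ite_eq]

lemma Pmu_single (a : Fin (d + 1)) (m : ℕ) : Pmu (Finsupp.single a m) = pk (a : ℕ) ^ m := by
  simp [Pmu, Finsupp.single_apply, pow_ite, Finset.prod_ite_eq]

/-- target ring of the parametrization -/
abbrev TT := MvPolynomial (Fin 2) (Polynomial ℂ)

/-- images of the variables under the parametrization -/
def gfun (d : ℕ) : Fin (d + 1) → TT := fun j =>
  monomial (Finsupp.single 0 1 + Finsupp.single 1 (j : ℕ)) (pk (j : ℕ))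

/-- the parametrization homomorphism -/
def phi (d : ℕ) : MvPolynomial (Fin (d + 1)) ℂ →ₐ[ℂ] TT := aeval (gfun d)

lemma monomial_prod {ι : Type*} (s : Finset ι) (e : ι → (Fin 2 →₀ ℕ)) (c : ι → Polynomial ℂ) :
    (∏ i ∈ s, (monomial (e i) (c i) : TT)) = monomial (∑ i ∈ s, e i) (∏ i ∈ s, c i) := by
  classical
  induction s using Finset.induction with
  | empty => simp [MvPolynomial.monomial_zero', MvPolynomial.C_1]
  | @insert a s h ih => simp [Finset.prod_insert h, Finset.sum_insert h, ih, MvPolynomial.monomial_mul]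

lemma single_sum' {α M ι : Type*} [AddCommMonoid M] (s : Finset ι) (a : α) (f : ι → M) :
    Finsupp.single a (∑ i ∈ s, f i) = ∑ i ∈ s, Finsupp.single a (f i) :=
  map_sum (Finsupp.singleAddHom a) f s

lemma phi_monomial (μ : Fin (d + 1) →₀ ℕ) (a : ℂ) :
    phi d (monomial μ a) =
      monomial (Finsupp.single 0 (dg μ) + Finsupp.single 1 (wt μ))
        (Polynomial.C a * Pmu μ) := by
  rw [phi, aeval_monomial, Finsupp.prod_fintype _ _ (fun i => pow_zero _)]
  have h1 : ∀ j : Fin (d + 1), gfun d j ^ μ j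
      = monomial (Finsupp.single 0 (μ j) + Finsupp.single 1 ((j : ℕ) * μ j))
          (pk (j : ℕ) ^ μ j) := by
    intro j
    rw [gfun, monomial_pow, smul_add, Finsupp.smul_single, Finsupp.smul_single,
      smul_eq_mul, smul_eq_mul, mul_one, mul_comm (μ j) (j : ℕ)]
  simp_rw [h1]
  rw [monomial_prod]
  have h2 : (algebraMap ℂ TT) a = C (Polynomial.C a) := by
    rw [IsScalarTower.algebraMap_eq ℂ (Polynomial ℂ) TT]
    rfl
  rw [h2, C_mul_monomial]
  congr 1
  rw [Finset.sum_add_distrib, dg, wt, single_sum', single_sum']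

lemma algMap_eq (a : ℂ) : algebraMap ℂ TT a = C (Polynomial.C a) := by
  rw [IsScalarTower.algebraMap_eq ℂ (Polynomial ℂ) TT]
  rfl

lemma gsucc (c : ℕ) (h : c < d) :
    gfun d ⟨c + 1, by omega⟩ =
      (monomial (Finsupp.single 1 1) Polynomial.X
        + C (Polynomial.C (c : ℂ)) * monomial (Finsupp.single 1 1) 1) * gfun d ⟨c, by omega⟩ := by
  simp only [gfun, C_mul_monomial, mul_one, ← map_add, monomial_mul]
  congr 1
  · refine congrArg _ ?_
    rw [Finsupp.single_add 1 c 1]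
    abel
  · show pk (c + 1) = (Polynomial.X + Polynomial.C (c : ℂ)) * pk c
    rw [pk_succ]
    ring

lemma phi_det (s : Fin 3 → Fin d) :
    phi d ((gammaMatrix d).submatrix id s).det = 0 := by
  rw [Matrix.det_fin_three]
  simp only [Matrix.submatrix_apply, id_eq, gammaMatrix, Matrix.of_apply,
    Matrix.cons_val_zero, Matrix.cons_val_one, Matrix.head_cons, Matrix.cons_val_two,
    Matrix.tail_cons]
  simp only [phi, map_add, map_sub, map_mul, aeval_X, aeval_C, algMap_eq]
  rw [gsucc ((s 0) : ℕ) (s 0).isLt, gsucc ((s 1) : ℕ) (s 1).isLt, gsucc ((s 2) : ℕ) (s 2).isLt]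
  ring

lemma minor_mem (p q r : ℕ) (hpq : p < q) (hqr : q < r) (hr : r < d) :
    (C ((p : ℂ) - q) * (X (⟨p, by omega⟩ : Fin (d + 1)) * X ⟨q, by omega⟩ * X ⟨r + 1, by omega⟩)
      + C ((q : ℂ) - r) * (X ⟨p + 1, by omega⟩ * X ⟨q, by omega⟩ * X ⟨r, by omega⟩)
      + C ((r : ℂ) - p) * (X ⟨p, by omega⟩ * X ⟨q + 1, by omega⟩ * X ⟨r, by omega⟩))
      ∈ gammaIdeal d := by
  apply Ideal.subset_span
  refine ⟨![⟨p, by omega⟩, ⟨q, by omega⟩, ⟨r, by omega⟩], ?_, ?_⟩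
  · intro a b hab
    fin_cases a <;> fin_cases b <;> simp_all [Fin.lt_def] <;> omega
  · rw [Matrix.det_fin_three]
    simp only [Matrix.submatrix_apply, id_eq, gammaMatrix, Matrix.of_apply,
      Matrix.cons_val_zero, Matrix.cons_val_one, Matrix.head_cons, Matrix.cons_val_two,
      Matrix.tail_cons, map_sub]
    ring

/-- standard monomial predicate: no divisor `m_i m_j m_k` with `1 ≤ i ≤ j < k ≤ d-1` -/
def Std (d : ℕ) (μ : Fin (d + 1) →₀ ℕ) : Prop :=
  ∀ i j k : Fin (d + 1), 1 ≤ (i : ℕ) → (i : ℕ) ≤ (j : ℕ) → (j : ℕ) < (k : ℕ) → (k : ℕ) < d →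
    ¬ (Finsupp.single i 1 + Finsupp.single j 1 + Finsupp.single k 1 ≤ μ)

/-- span of standard monomials -/
def V (d : ℕ) : Submodule ℂ (MvPolynomial (Fin (d + 1)) ℂ) where
  carrier := {f | ∀ μ ∈ f.support, Std d μ}
  add_mem' := by
    intro a b ha hb μ hμ
    rcases Finset.mem_union.mp (MvPolynomial.support_add hμ) with h | h
    exacts [ha μ h, hb μ h]
  zero_mem' := by simp
  smul_mem' := by
    intro c f hf μ hμ
    exact hf μ (MvPolynomial.support_smul hμ)

lemma w2_add (μ ν : Fin (d + 1) →₀ ℕ) : w2 (μ + ν) = w2 μ + w2 ν := by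
  simp [w2, mul_add, Finset.sum_add_distrib]

lemma w2_single (a : Fin (d + 1)) (m : ℕ) : w2 (Finsupp.single a m) = (a : ℕ) ^ 2 * m := by
  simp [w2, Finsupp.single_apply, mul_ite, Finset.sum_ite_eq]

lemma w2_le_wt (μ : Fin (d + 1) →₀ ℕ) : w2 μ ≤ d * wt μ := by
  rw [w2, wt, Finset.mul_sum]
  refine Finset.sum_le_sum fun j _ => ?_
  have : (j : ℕ) ≤ d := by omega
  calc (j : ℕ) ^ 2 * μ j = (j : ℕ) * ((j : ℕ) * μ j) := by ring
  _ ≤ d * ((j : ℕ) * μ j) := Nat.mul_le_mul_right _ this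

lemma X_eq (a : Fin (d + 1)) :
    (X a : MvPolynomial (Fin (d + 1)) ℂ) = monomial (Finsupp.single a 1) 1 := rfl

lemma mono3 (a b c : Fin (d + 1)) (ν : Fin (d + 1) →₀ ℕ) :
    monomial ν (1 : ℂ) * (X a * X b * X c)
      = monomial (ν + (Finsupp.single a 1 + Finsupp.single b 1 + Finsupp.single c 1)) 1 := by
  rw [X_eq, X_eq, X_eq]
  simp only [monomial_mul, one_mul, mul_one]

lemma monomial_mem (hd3 : 3 ≤ d) : ∀ μ : Fin (d + 1) →₀ ℕ,
    (monomial μ (1 : ℂ)) ∈ V d ⊔ (gammaIdeal d).restrictScalars ℂ := by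
  suffices H : ∀ N, ∀ μ : Fin (d + 1) →₀ ℕ, d * wt μ - w2 μ < N →
      (monomial μ (1 : ℂ)) ∈ V d ⊔ (gammaIdeal d).restrictScalars ℂ by
    intro μ; exact H _ μ (Nat.lt_succ_self _)
  intro N
  induction N with
  | zero => exact fun μ h => absurd h (by omega)
  | succ N ih =>
    intro μ hμ
    by_cases hstd : Std d μ
    · refine Submodule.mem_sup_left (fun ν hν => ?_)
      rw [MvPolynomial.support_monomial, if_neg one_ne_zero, Finset.mem_singleton] at hν
      exact hν ▸ hstd
    rw [Std] at hstd
    push_neg at hstd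
    obtain ⟨i, j, k, hi1, hij, hjk, hkd, hle⟩ := hstd
    set p : ℕ := (i : ℕ) - 1 with hp
    set q : ℕ := (j : ℕ) with hq
    set r : ℕ := (k : ℕ) with hr
    have hpq : p < q := by omega
    have hqr : q < r := by omega
    have hrd : r < d := hkd
    set i' : Fin (d + 1) := ⟨p, by omega⟩ with hi'
    set j' : Fin (d + 1) := ⟨q + 1, by omega⟩ with hj'
    set k' : Fin (d + 1) := ⟨r + 1, by omega⟩ with hk'
    have hminM : (C ((p : ℂ) - q) * (X i' * X j * X k') + C ((q : ℂ) - r) * (X i * X j * X k)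
        + C ((r : ℂ) - p) * (X i' * X j' * X k)) ∈ gammaIdeal d := by
      have h2 : (⟨p + 1, by omega⟩ : Fin (d + 1)) = i := Fin.ext (by simp [hp]; omega)
      have h3 : (⟨q, by omega⟩ : Fin (d + 1)) = j := Fin.ext rfl
      have h4 : (⟨r, by omega⟩ : Fin (d + 1)) = k := Fin.ext rfl
      have := minor_mem (d := d) p q r hpq hqr hrd
      rwa [h2, h3, h4] at this
    obtain ⟨μ', hsum⟩ : ∃ μ',
        μ' + (Finsupp.single i 1 + Finsupp.single j 1 + Finsupp.single k 1) = μ :=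
      ⟨μ - (Finsupp.single i 1 + Finsupp.single j 1 + Finsupp.single k 1),
        tsub_add_cancel_of_le hle⟩
    obtain ⟨μA, hμA⟩ : ∃ x, x = μ' + (Finsupp.single i' 1 + Finsupp.single j 1
        + Finsupp.single k' 1) := ⟨_, rfl⟩
    obtain ⟨μB, hμB⟩ : ∃ x, x = μ' + (Finsupp.single i' 1 + Finsupp.single j' 1
        + Finsupp.single k 1) := ⟨_, rfl⟩
    have expand0 : monomial μ' (1 : ℂ)
          * (C ((p : ℂ) - q) * (X i' * X j * X k') + C ((q : ℂ) - r) * (X i * X j * X k) + C ((r : ℂ) - p) * (X i' * X j' * X k))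
        = C ((p : ℂ) - q) * monomial μA 1 + C ((q : ℂ) - r) * monomial μ 1 + C ((r : ℂ) - p) * monomial μB 1 := by
      rw [show monomial μ' (1 : ℂ)
          * (C ((p : ℂ) - q) * (X i' * X j * X k') + C ((q : ℂ) - r) * (X i * X j * X k) + C ((r : ℂ) - p) * (X i' * X j' * X k))
        = C ((p : ℂ) - q) * (monomial μ' 1 * (X i' * X j * X k'))
          + C ((q : ℂ) - r) * (monomial μ' 1 * (X i * X j * X k))
          + C ((r : ℂ) - p) * (monomial μ' 1 * (X i' * X j' * X k)) from by ring]
      rw [mono3, mono3, mono3, hsum, ← hμA, ← hμB]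
    have hwtpat : ∀ (a b c : Fin (d + 1)) (ν : Fin (d + 1) →₀ ℕ),
        wt (ν + (Finsupp.single a 1 + Finsupp.single b 1 + Finsupp.single c 1))
          = wt ν + ((a : ℕ) + (b : ℕ) + (c : ℕ)) := by
      intro a b c ν
      rw [wt_add, wt_add, wt_add, wt_single, wt_single, wt_single]
      ring
    have hw2pat : ∀ (a b c : Fin (d + 1)) (ν : Fin (d + 1) →₀ ℕ),
        w2 (ν + (Finsupp.single a 1 + Finsupp.single b 1 + Finsupp.single c 1))
          = w2 ν + ((a : ℕ) ^ 2 + (b : ℕ) ^ 2 + (c : ℕ) ^ 2) := by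
      intro a b c ν
      rw [w2_add, w2_add, w2_add, w2_single, w2_single, w2_single]
      ring
    have hvi : (i : ℕ) = p + 1 := by omega
    have hvi' : (i' : ℕ) = p := rfl
    have hvj' : (j' : ℕ) = q + 1 := rfl
    have hvk' : (k' : ℕ) = r + 1 := rfl
    have hwtμ : wt μ = wt μ' + ((i : ℕ) + (j : ℕ) + (k : ℕ)) := by rw [← hsum, hwtpat]
    have hwtA : wt μA = wt μ' + ((i' : ℕ) + (j : ℕ) + (k' : ℕ)) := by rw [hμA, hwtpat]
    have hwtB : wt μB = wt μ' + ((i' : ℕ) + (j' : ℕ) + (k : ℕ)) := by rw [hμB, hwtpat]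
    have hw2μ : w2 μ = w2 μ' + ((i : ℕ) ^ 2 + (j : ℕ) ^ 2 + (k : ℕ) ^ 2) := by
      rw [← hsum, hw2pat]
    have hw2A : w2 μA = w2 μ' + ((i' : ℕ) ^ 2 + (j : ℕ) ^ 2 + (k' : ℕ) ^ 2) := by
      rw [hμA, hw2pat]
    have hw2B : w2 μB = w2 μ' + ((i' : ℕ) ^ 2 + (j' : ℕ) ^ 2 + (k : ℕ) ^ 2) := by
      rw [hμB, hw2pat]
    rw [hvi] at hwtμ hw2μ
    rw [hvi'] at hwtA hw2A hwtB hw2B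
    rw [hvk'] at hwtA hw2A
    rw [hvj'] at hwtB hw2B
    have hwA : wt μA = wt μ := by omega
    have hwB : wt μB = wt μ := by omega
    have hEqA : w2 μA + (p + 1) ^ 2 + r ^ 2 = w2 μ + p ^ 2 + (r + 1) ^ 2 := by
      rw [hw2A, hw2μ]; ring
    have hEqB : w2 μB + (p + 1) ^ 2 + q ^ 2 = w2 μ + p ^ 2 + (q + 1) ^ 2 := by
      rw [hw2B, hw2μ]; ring
    have s1 : (p + 1) ^ 2 = p ^ 2 + 2 * p + 1 := by ring
    have s2 : (r + 1) ^ 2 = r ^ 2 + 2 * r + 1 := by ring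
    have s3 : (q + 1) ^ 2 = q ^ 2 + 2 * q + 1 := by ring
    rw [s1, s2] at hEqA
    rw [s1, s3] at hEqB
    have hA' : w2 μA + 2 * p = w2 μ + 2 * r := by
      generalize p ^ 2 = P at hEqA
      generalize r ^ 2 = R at hEqA
      omega
    have hB' : w2 μB + 2 * p = w2 μ + 2 * q := by
      generalize p ^ 2 = P at hEqB
      generalize q ^ 2 = Q at hEqB
      omega
    have hleA := w2_le_wt μA
    have hleB := w2_le_wt μB
    have hleμ := w2_le_wt μ
    rw [hwA] at hleA
    rw [hwB] at hleB
    have hmA : d * wt μA - w2 μA < N := by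
      rw [hwA]
      generalize d * wt μ = D at hμ hleA hleμ ⊢
      omega
    have hmB : d * wt μB - w2 μB < N := by
      rw [hwB]
      generalize d * wt μ = D at hμ hleB hleμ ⊢
      omega
    have ha2' : ((q : ℂ) - r) ≠ 0 := sub_ne_zero.mpr (by exact_mod_cast Nat.ne_of_lt hqr)
    have hmem2 : C ((q : ℂ) - r) * monomial μ (1 : ℂ) ∈ V d ⊔ (gammaIdeal d).restrictScalars ℂ := by
      rw [show C ((q : ℂ) - r) * monomial μ (1 : ℂ)
          = monomial μ' 1 * (C ((p : ℂ) - q) * (X i' * X j * X k') + C ((q : ℂ) - r) * (X i * X j * X k)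
              + C ((r : ℂ) - p) * (X i' * X j' * X k))
            - C ((p : ℂ) - q) * monomial μA 1 - C ((r : ℂ) - p) * monomial μB 1 from by rw [expand0]; ring]
      refine sub_mem (sub_mem (Submodule.mem_sup_right ?_) ?_) ?_
      · exact Ideal.mul_mem_left _ _ hminM
      · rw [← smul_eq_C_mul]; exact Submodule.smul_mem _ _ (ih μA hmA)
      · rw [← smul_eq_C_mul]; exact Submodule.smul_mem _ _ (ih μB hmB)
    rw [show monomial μ (1 : ℂ) = ((q : ℂ) - r)⁻¹ • (C ((q : ℂ) - r) * monomial μ 1) from by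
      rw [← smul_eq_C_mul, smul_smul, inv_mul_cancel₀ ha2', one_smul]]
    exact Submodule.smul_mem _ _ hmem2

lemma Pmu_zero : Pmu (0 : Fin (d + 1) →₀ ℕ) = 1 := by simp [Pmu]

lemma dg_eq_zero {μ : Fin (d + 1) →₀ ℕ} (h : dg μ = 0) : μ = 0 := by
  ext j
  have := Finset.sum_eq_zero_iff.mp h j (Finset.mem_univ j)
  simpa using this

lemma Pmu_eval_zero {k : ℕ} {μ : Fin (d + 1) →₀ ℕ} (j : Fin (d + 1)) (hj : k < (j : ℕ))
    (hμj : μ j ≠ 0) : Polynomial.eval (-(k : ℂ)) (Pmu μ) = 0 := by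
  rw [Pmu, Polynomial.eval_prod]
  apply Finset.prod_eq_zero (Finset.mem_univ j)
  rw [Polynomial.eval_pow, eval_pk_eq_zero hj, zero_pow hμj]

lemma Pmu_eval_ne_zero {k : ℕ} {μ : Fin (d + 1) →₀ ℕ}
    (h : ∀ j : Fin (d + 1), k < (j : ℕ) → μ j = 0) :
    Polynomial.eval (-(k : ℂ)) (Pmu μ) ≠ 0 := by
  rw [Pmu, Polynomial.eval_prod]
  apply Finset.prod_ne_zero_iff.mpr
  intro j _
  rw [Polynomial.eval_pow]
  by_cases hj : (j : ℕ) ≤ k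
  · exact pow_ne_zero _ (eval_pk_ne_zero hj)
  · rw [h j (by omega), pow_zero]
    exact one_ne_zero

lemma Std_mono {μ ν : Fin (d + 1) →₀ ℕ} (hle : ν ≤ μ) (h : Std d μ) : Std d ν :=
  fun i j k h1 h2 h3 h4 hp => h i j k h1 h2 h3 h4 (hp.trans hle)

lemma le_pat3 {a b c : Fin (d + 1)} {μ : Fin (d + 1) →₀ ℕ} (hab : a ≠ b) (hac : a ≠ c)
    (hbc : b ≠ c) (ha : 1 ≤ μ a) (hb : 1 ≤ μ b) (hc : 1 ≤ μ c) :
    Finsupp.single a 1 + Finsupp.single b 1 + Finsupp.single c 1 ≤ μ := by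
  rw [Finsupp.le_def]
  intro x
  simp only [Finsupp.coe_add, Pi.add_apply, Finsupp.single_apply]
  by_cases h1 : a = x <;> by_cases h2 : b = x <;> by_cases h3 : c = x <;>
    subst_eqs <;> simp_all <;> omega

lemma le_pat2 {a c : Fin (d + 1)} {μ : Fin (d + 1) →₀ ℕ} (hac : a ≠ c)
    (ha : 2 ≤ μ a) (hc : 1 ≤ μ c) :
    Finsupp.single a 1 + Finsupp.single a 1 + Finsupp.single c 1 ≤ μ := by
  rw [Finsupp.le_def]
  intro x
  simp only [Finsupp.coe_add, Pi.add_apply, Finsupp.single_apply]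
  by_cases h1 : a = x <;> by_cases h3 : c = x <;>
    subst_eqs <;> simp_all <;> omega

lemma sum_eq_one (f : Fin (d + 1) → ℕ) (a : Fin (d + 1))
    (h0 : ∀ j, j ≠ a → f j = 0) : ∑ j, f j = f a := by
  rw [show f a = ∑ j ∈ ({a} : Finset (Fin (d + 1))), f j by simp]
  apply (Finset.sum_subset (Finset.subset_univ _) ?_).symm
  intro x _ hx
  exact h0 x (by simpa using hx)

lemma sum_eq_two (f : Fin (d + 1) → ℕ) (a b : Fin (d + 1)) (hab : a ≠ b)
    (h0 : ∀ j, j ≠ a → j ≠ b → f j = 0) : ∑ j, f j = f a + f b := by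
  rw [← Finset.sum_pair hab]
  apply (Finset.sum_subset (Finset.subset_univ _) ?_).symm
  intro x _ hx
  simp only [Finset.mem_insert, Finset.mem_singleton] at hx
  push_neg at hx
  exact h0 x hx.1 hx.2

lemma sum_eq_three (f : Fin (d + 1) → ℕ) (a b c : Fin (d + 1)) (hab : a ≠ b) (hac : a ≠ c)
    (hbc : b ≠ c) (h0 : ∀ j, j ≠ a → j ≠ b → j ≠ c → f j = 0) :
    ∑ j, f j = f a + (f b + f c) := by
  rw [show f a + (f b + f c) = ∑ j ∈ ({a, b, c} : Finset (Fin (d + 1))), f j by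
    rw [Finset.sum_insert (by simp [hab, hac]), Finset.sum_pair hbc]]
  apply (Finset.sum_subset (Finset.subset_univ _) ?_).symm
  intro x _ hx
  simp only [Finset.mem_insert, Finset.mem_singleton] at hx
  push_neg at hx
  exact h0 x hx.1 hx.2.1 hx.2.2

lemma struct {k : ℕ} (hk1 : 1 ≤ k) (hkd : k < d) (K : Fin (d + 1)) (hKval : (K : ℕ) = k)
    {μ : Fin (d + 1) →₀ ℕ}
    (hStd : Std d μ) (hp : ∀ j : Fin (d + 1), k < (j : ℕ) → μ j = 0)
    (hμk : μ K ≠ 0) :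
    ((∀ j : Fin (d + 1), 1 ≤ (j : ℕ) → (j : ℕ) < k → μ j = 0)
        ∧ wt μ = k * μ K ∧ dg μ = μ 0 + μ K)
    ∨ (∃ i : Fin (d + 1), 1 ≤ (i : ℕ) ∧ (i : ℕ) < k ∧ μ i = 1
        ∧ (∀ j : Fin (d + 1), 1 ≤ (j : ℕ) → (j : ℕ) < k → j ≠ i → μ j = 0)
        ∧ wt μ = (i : ℕ) + k * μ K
        ∧ dg μ = μ 0 + 1 + μ K) := by
  have hA : ∀ j : Fin (d + 1), 1 ≤ (j : ℕ) → (j : ℕ) < k → μ j ≤ 1 := by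
    intro j h1 h2
    by_contra hgt
    push_neg at hgt
    exact hStd j j K h1 le_rfl (by omega) (by omega)
      (le_pat2 (Fin.ne_of_val_ne (by omega)) (by omega) (by omega))
  have hB : ∀ j1 j2 : Fin (d + 1), 1 ≤ (j1 : ℕ) → (j1 : ℕ) < (j2 : ℕ) → (j2 : ℕ) < k →
      (μ j1 = 0 ∨ μ j2 = 0) := by
    intro j1 j2 h1 h2 h3
    by_contra hcon
    push_neg at hcon
    exact hStd j1 j2 K h1 (by omega) (by omega) (by omega)
      (le_pat3 (Fin.ne_of_val_ne (by omega)) (Fin.ne_of_val_ne (by omega))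
        (Fin.ne_of_val_ne (by omega)) (by omega) (by omega) (by omega))
  have h0K : (0 : Fin (d + 1)) ≠ K := Fin.ne_of_val_ne (by simp; omega)
  by_cases hmid : ∃ jm : Fin (d + 1), 1 ≤ (jm : ℕ) ∧ (jm : ℕ) < k ∧ μ jm ≠ 0
  · right
    obtain ⟨i, hi1, hik, hine⟩ := hmid
    have hione : μ i = 1 := by
      have := hA i hi1 hik
      omega
    have hothers : ∀ j : Fin (d + 1), 1 ≤ (j : ℕ) → (j : ℕ) < k → j ≠ i → μ j = 0 := by
      intro j h1 h2 hji
      rcases lt_trichotomy (j : ℕ) (i : ℕ) with h | h | h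
      · rcases hB j i h1 h hik with h' | h'
        exacts [h', absurd h' hine]
      · exact absurd (Fin.ext h) hji
      · rcases hB i j hi1 h h2 with h' | h'
        exacts [absurd h' hine, h']
    have h0i : (0 : Fin (d + 1)) ≠ i := Fin.ne_of_val_ne (by simp; omega)
    have hiK : i ≠ K := Fin.ne_of_val_ne (by omega)
    have hzero : ∀ j : Fin (d + 1), j ≠ i → j ≠ K → μ j ≠ 0 → (j : ℕ) = 0 := by
      intro j hji hjK hjne
      by_contra hj0
      have hj1 : 1 ≤ (j : ℕ) := by omega
      have hjk : (j : ℕ) ≠ k := fun hc => hjK (Fin.ext (by omega))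
      rcases Nat.lt_or_ge (j : ℕ) k with h2 | h2
      · exact hjne (hothers j hj1 h2 hji)
      · exact hjne (hp j (by omega))
    refine ⟨i, hi1, hik, hione, hothers, ?_, ?_⟩
    · have hside : ∀ j : Fin (d + 1), j ≠ i → j ≠ K → (j : ℕ) * μ j = 0 := by
        intro j hji hjK
        by_cases hjne : μ j = 0
        · rw [hjne, mul_zero]
        · rw [hzero j hji hjK hjne, zero_mul]
      rw [wt, sum_eq_two _ i K hiK hside, hione, hKval, mul_one]
    · have hside : ∀ j : Fin (d + 1), j ≠ 0 → j ≠ i → j ≠ K → μ j = 0 := by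
        intro j hj0 hji hjK
        by_contra hjne
        exact hj0 (Fin.ext (by simpa using hzero j hji hjK hjne))
      rw [dg, sum_eq_three _ 0 i K h0i h0K hiK hside, hione]
      omega
  · left
    push_neg at hmid
    have hmid' : ∀ j : Fin (d + 1), 1 ≤ (j : ℕ) → (j : ℕ) < k → μ j = 0 := hmid
    have hzero : ∀ j : Fin (d + 1), j ≠ K → μ j ≠ 0 → (j : ℕ) = 0 := by
      intro j hjK hjne
      by_contra hj0
      have hj1 : 1 ≤ (j : ℕ) := by omega
      have hjk : (j : ℕ) ≠ k := fun hc => hjK (Fin.ext (by omega))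
      rcases Nat.lt_or_ge (j : ℕ) k with h2 | h2
      · exact hjne (hmid' j hj1 h2)
      · exact hjne (hp j (by omega))
    refine ⟨hmid', ?_, ?_⟩
    · have hside : ∀ j : Fin (d + 1), j ≠ K → (j : ℕ) * μ j = 0 := by
        intro j hjK
        by_cases hjne : μ j = 0
        · rw [hjne, mul_zero]
        · rw [hzero j hjK hjne, zero_mul]
      rw [wt, sum_eq_one _ K hside, hKval]
    · have hside : ∀ j : Fin (d + 1), j ≠ 0 → j ≠ K → μ j = 0 := by
        intro j hj0 hjK
        by_contra hjne
        exact hj0 (Fin.ext (by simpa using hzero j hjK hjne))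
      rw [dg, sum_eq_two _ 0 K h0K hside]

lemma uniq {k : ℕ} (hk1 : 1 ≤ k) (hkd : k < d) (K : Fin (d + 1)) (hKval : (K : ℕ) = k)
    {μ ν : Fin (d + 1) →₀ ℕ}
    (hμS : Std d μ) (hνS : Std d ν) (hdg : dg μ = dg ν) (hwt : wt μ = wt ν)
    (hμp : ∀ j : Fin (d + 1), k < (j : ℕ) → μ j = 0)
    (hνp : ∀ j : Fin (d + 1), k < (j : ℕ) → ν j = 0)
    (hμk : μ K ≠ 0) (hνk : ν K ≠ 0) : μ = ν := by
  have Hμ := struct hk1 hkd K hKval hμS hμp hμk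
  have Hν := struct hk1 hkd K hKval hνS hνp hνk
  have extend : μ K = ν K → μ 0 = ν 0 →
      (∀ j : Fin (d + 1), 1 ≤ (j : ℕ) → (j : ℕ) < k → μ j = ν j) → μ = ν := by
    intro h1 h2 h3
    ext x
    rcases Nat.eq_zero_or_pos (x : ℕ) with hx | hx
    · rw [show x = 0 from Fin.ext (by simpa using hx)]
      exact h2
    rcases Nat.lt_or_ge (x : ℕ) k with hx2 | hx2
    · exact h3 x hx hx2
    rcases Nat.eq_or_lt_of_le hx2 with hx3 | hx3
    · rw [show x = K from Fin.ext (by omega)]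
      exact h1
    · rw [hμp x hx3, hνp x hx3]
  rcases Hμ with ⟨hm0, hw, hd'⟩ | ⟨i, hi1, hik, hi_one, hmid, hw, hd'⟩ <;>
    rcases Hν with ⟨hn0, hw', hd''⟩ | ⟨i', hi1', hik', hi_one', hmid', hw', hd''⟩
  · rw [hw, hw'] at hwt
    have hKK : μ K = ν K := Nat.eq_of_mul_eq_mul_left (by omega) hwt
    rw [hd', hd''] at hdg
    refine extend hKK (by omega) ?_
    intro j h1 h2
    rw [hm0 j h1 h2, hn0 j h1 h2]
  · exfalso
    rw [hw, hw'] at hwt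
    have e0 : (k * μ K) % k = ((i' : ℕ) + k * ν K) % k := by rw [hwt]
    rw [Nat.mul_mod_right, Nat.add_mul_mod_self_left, Nat.mod_eq_of_lt hik'] at e0
    omega
  · exfalso
    rw [hw, hw'] at hwt
    have e0 : ((i : ℕ) + k * μ K) % k = (k * ν K) % k := by rw [hwt]
    rw [Nat.mul_mod_right, Nat.add_mul_mod_self_left, Nat.mod_eq_of_lt hik] at e0
    omega
  · rw [hw, hw'] at hwt
    have hii' : (i : ℕ) = (i' : ℕ) := by
      have e0 : ((i : ℕ) + k * μ K) % k = ((i' : ℕ) + k * ν K) % k := by rw [hwt]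
      rwa [Nat.add_mul_mod_self_left, Nat.add_mul_mod_self_left, Nat.mod_eq_of_lt hik,
        Nat.mod_eq_of_lt hik'] at e0
    have hieq : i = i' := Fin.ext hii'
    rw [hii'] at hwt
    have hwt2 : k * μ K = k * ν K := Nat.add_left_cancel hwt
    have hKK : μ K = ν K := Nat.eq_of_mul_eq_mul_left (by omega) hwt2
    rw [hd', hd''] at hdg
    refine extend hKK (by omega) ?_
    intro j h1 h2
    by_cases hji : j = i
    · rw [hji, hi_one, hieq, hi_one']
    · rw [hmid j h1 h2 hji, hmid' j h1 h2 (fun hc => hji (hc.trans hieq.symm))]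

lemma KL (hd1 : 1 ≤ d) : ∀ n s : ℕ, ∀ F : Finset (Fin (d + 1) →₀ ℕ),
    ∀ c : (Fin (d + 1) →₀ ℕ) → ℂ,
    (∀ μ ∈ F, Std d μ ∧ dg μ = n ∧ wt μ = s) →
    (∑ μ ∈ F, Polynomial.C (c μ) * Pmu μ) = 0 → ∀ μ ∈ F, c μ = 0 := by
  intro n
  induction n with
  | zero =>
    intro s F c hF hrel μ hμF
    have hμ0 : μ = 0 := dg_eq_zero (hF μ hμF).2.1
    have hFsub : F = {(0 : Fin (d + 1) →₀ ℕ)} :=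
      Finset.eq_singleton_iff_unique_mem.mpr
        ⟨hμ0 ▸ hμF, fun x hx => dg_eq_zero (hF x hx).2.1⟩
    rw [hFsub, Finset.sum_singleton, Pmu_zero, mul_one] at hrel
    rw [hμ0]
    exact Polynomial.C_eq_zero.mp hrel
  | succ n ih =>
    intro s F c hF hrel
    have step1 : ∀ k : ℕ, k < d → ∀ μ ∈ F,
        (∀ j : Fin (d + 1), k < (j : ℕ) → μ j = 0) → c μ = 0 := by
      intro k
      induction k using Nat.strong_induction_on with
      | _ k ihk =>
        intro hkd μ hμF hparts
        obtain ⟨K, hKval⟩ : ∃ K : Fin (d + 1), (K : ℕ) = k := ⟨⟨k, by omega⟩, rfl⟩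
        have heval : (∑ ν ∈ F, c ν * Polynomial.eval (-(k : ℂ)) (Pmu ν)) = 0 := by
          have h := congrArg (Polynomial.eval (-(k : ℂ))) hrel
          rw [Polynomial.eval_finset_sum, Polynomial.eval_zero] at h
          rw [← h]
          exact Finset.sum_congr rfl fun ν _ => by rw [Polynomial.eval_mul, Polynomial.eval_C]
        by_cases hk0 : k = 0
        · subst hk0
          have huniq : ∀ ν ∈ F, (∀ j : Fin (d + 1), 0 < (j : ℕ) → ν j = 0) → ν = μ := by
            intro ν hνF hνp
            have hd1' : ∀ ξ : Fin (d + 1) →₀ ℕ,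
                (∀ j : Fin (d + 1), 0 < (j : ℕ) → ξ j = 0) → dg ξ = ξ 0 := by
              intro ξ hξ
              rw [dg]
              apply sum_eq_one
              intro j hj
              apply hξ
              rcases Nat.eq_zero_or_pos (j : ℕ) with h | h
              · exact absurd (Fin.ext (by simpa using h)) hj
              · exact h
            ext x
            rcases Nat.eq_zero_or_pos (x : ℕ) with hx | hx
            · rw [show x = 0 from Fin.ext (by simpa using hx)]
              have e1 := hd1' ν hνp
              have e2 := hd1' μ hparts
              have e3 : dg ν = dg μ := by rw [(hF ν hνF).2.1, (hF μ hμF).2.1]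
              omega
            · rw [hνp x hx, hparts x hx]
          rw [Finset.sum_eq_single_of_mem μ hμF ?_] at heval
          · rcases mul_eq_zero.mp heval with h | h
            · exact h
            · exact absurd h (Pmu_eval_ne_zero hparts)
          · intro ν hνF hνμ
            by_cases hν : ∀ j : Fin (d + 1), 0 < (j : ℕ) → ν j = 0
            · exact absurd (huniq ν hνF hν) hνμ
            · push_neg at hν
              obtain ⟨j, hj1, hj2⟩ := hν
              rw [Pmu_eval_zero j hj1 hj2, mul_zero]
        · by_cases hμk : μ K = 0
          · refine ihk (k - 1) (by omega) (by omega) μ hμF ?_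
            intro j hj
            rcases Nat.lt_or_ge k (j : ℕ) with h | h
            · exact hparts j h
            · rw [show j = K from Fin.ext (by omega)]
              exact hμk
          · rw [Finset.sum_eq_single_of_mem μ hμF ?_] at heval
            · rcases mul_eq_zero.mp heval with h | h
              · exact h
              · exact absurd h (Pmu_eval_ne_zero hparts)
            · intro ν hνF hνμ
              by_cases hν : ∀ j : Fin (d + 1), k < (j : ℕ) → ν j = 0
              · by_cases hνk : ν K = 0
                · have hcν : c ν = 0 := by
                    refine ihk (k - 1) (by omega) (by omega) ν hνF ?_
                    intro j hj
                    rcases Nat.lt_or_ge k (j : ℕ) with h | h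
                    · exact hν j h
                    · rw [show j = K from Fin.ext (by omega)]
                      exact hνk
                  rw [hcν, zero_mul]
                · have : ν = μ := uniq (by omega) hkd K hKval (hF ν hνF).1 (hF μ hμF).1
                    (by rw [(hF ν hνF).2.1, (hF μ hμF).2.1])
                    (by rw [(hF ν hνF).2.2, (hF μ hμF).2.2]) hν hparts hνk hμk
                  exact absurd this hνμ
              · push_neg at hν
                obtain ⟨j, hj1, hj2⟩ := hν
                rw [Pmu_eval_zero j hj1 hj2, mul_zero]
    obtain ⟨Kd, hKd⟩ : ∃ K : Fin (d + 1), (K : ℕ) = d := ⟨⟨d, by omega⟩, rfl⟩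
    have hstep1' : ∀ μ ∈ F, μ Kd = 0 → c μ = 0 := by
      intro μ hμF hμd
      refine step1 (d - 1) (by omega) μ hμF ?_
      intro j hj
      have := j.isLt
      rw [show j = Kd from Fin.ext (by omega)]
      exact hμd
    classical
    set F' := F.filter (fun μ => μ Kd ≠ 0) with hF'
    have hrel' : (∑ μ ∈ F', Polynomial.C (c μ) * Pmu μ) = 0 := by
      rw [← hrel]
      symm
      rw [← Finset.sum_filter_add_sum_filter_not F (fun μ => μ Kd ≠ 0)]
      rw [show (∑ μ ∈ F.filter (fun μ => ¬ μ Kd ≠ 0), Polynomial.C (c μ) * Pmu μ) = 0 from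
        Finset.sum_eq_zero fun μ hμ => by
          rw [hstep1' μ (Finset.mem_filter.mp hμ).1 (not_not.mp (Finset.mem_filter.mp hμ).2),
            map_zero, zero_mul]]
      rw [add_zero]
    have hδle : ∀ μ ∈ F', Finsupp.single Kd 1 ≤ μ := by
      intro μ hμ
      rw [Finsupp.single_le_iff]
      have := (Finset.mem_filter.mp hμ).2
      omega
    have hfact : ∀ μ ∈ F', Pmu μ = Pmu (μ - Finsupp.single Kd 1) * pk d := by
      intro μ hμ
      conv_lhs => rw [show μ = μ - Finsupp.single Kd 1 + Finsupp.single Kd 1 from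
        (tsub_add_cancel_of_le (hδle μ hμ)).symm]
      rw [Pmu_add, Pmu_single, hKd, pow_one]
    have hsum0 : (∑ μ ∈ F', Polynomial.C (c μ) * Pmu (μ - Finsupp.single Kd 1)) * pk d = 0 := by
      rw [Finset.sum_mul, ← hrel']
      exact Finset.sum_congr rfl fun μ hμ => by rw [hfact μ hμ]; ring
    have hker : (∑ μ ∈ F', Polynomial.C (c μ) * Pmu (μ - Finsupp.single Kd 1)) = 0 := by
      rcases mul_eq_zero.mp hsum0 with h | h
      · exact h
      · exact absurd h (pk_ne_zero d)
    have him : (∑ ν ∈ F'.image (fun μ => μ - Finsupp.single Kd 1),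
        Polynomial.C (c (ν + Finsupp.single Kd 1)) * Pmu ν) = 0 := by
      rw [Finset.sum_image ?_]
      · rw [← hker]
        exact Finset.sum_congr rfl fun μ hμ => by
          rw [tsub_add_cancel_of_le (hδle μ hμ)]
      · intro x hx y hy h
        have := congrArg (· + Finsupp.single Kd 1) h
        simpa [tsub_add_cancel_of_le (hδle x hx), tsub_add_cancel_of_le (hδle y hy)] using this
    have hcond : ∀ ν ∈ F'.image (fun μ => μ - Finsupp.single Kd 1),
        Std d ν ∧ dg ν = n ∧ wt ν = s - d := by
      intro ν hν
      rw [Finset.mem_image] at hν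
      obtain ⟨μ, hμ, rfl⟩ := hν
      have hμF : μ ∈ F := (Finset.mem_filter.mp hμ).1
      have hμeq : μ - Finsupp.single Kd 1 + Finsupp.single Kd 1 = μ :=
        tsub_add_cancel_of_le (hδle μ hμ)
      refine ⟨Std_mono tsub_le_self (hF μ hμF).1, ?_, ?_⟩
      · have hthis := (hF μ hμF).2.1
        rw [← hμeq, dg_add, dg_single] at hthis
        omega
      · have hthis := (hF μ hμF).2.2
        rw [← hμeq, wt_add, wt_single, hKd, mul_one] at hthis
        omega
    have hconc := ih (s - d) _ _ hcond him
    intro μ hμF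
    by_cases hμd : μ Kd = 0
    · exact hstep1' μ hμF hμd
    · have hμ' : μ ∈ F' := Finset.mem_filter.mpr ⟨hμF, hμd⟩
      have := hconc (μ - Finsupp.single Kd 1) (Finset.mem_image_of_mem _ hμ')
      rwa [tsub_add_cancel_of_le (hδle μ hμ')] at this

end

end GammaAux

/-- For every `d ≥ 3`, the ideal `I₃(G)` of the gamma moment variety is prime. -/
theorem gammaIdeal_isPrime (d : ℕ) (hd : 3 ≤ d) : (gammaIdeal d).IsPrime := by
  have hle : gammaIdeal d ≤ RingHom.ker (GammaAux.phi d).toRingHom := by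
    rw [gammaIdeal, Ideal.span_le]
    rintro p ⟨s, _, rfl⟩
    exact RingHom.mem_ker.mpr (GammaAux.phi_det s)
  have hker : gammaIdeal d = RingHom.ker (GammaAux.phi d).toRingHom := by
    refine le_antisymm hle ?_
    intro f hf
    have hf0 : GammaAux.phi d f = 0 := hf
    have hsp : f ∈ GammaAux.V d ⊔ (gammaIdeal d).restrictScalars ℂ := by
      rw [MvPolynomial.as_sum f]
      apply Submodule.sum_mem
      intro μ hμ
      rw [show (monomial μ) (coeff μ f) = (coeff μ f) • (monomial μ (1 : ℂ)) by
        rw [MvPolynomial.smul_monomial, smul_eq_mul, mul_one]]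
      exact Submodule.smul_mem _ _ (GammaAux.monomial_mem hd μ)
    obtain ⟨v, hv, h, hh, rfl⟩ := Submodule.mem_sup.mp hsp
    have hφh : GammaAux.phi d h = 0 := hle hh
    have hφv : GammaAux.phi d v = 0 := by
      have := hf0
      rw [map_add, hφh, add_zero] at this
      exact this
    have hv0 : v = 0 := by
      ext μ0
      rw [MvPolynomial.coeff_zero]
      by_cases hsupp : μ0 ∈ v.support
      swap
      · exact MvPolynomial.notMem_support_iff.mp hsupp
      have hexp : GammaAux.phi d v = ∑ μ ∈ v.support,
          monomial (Finsupp.single 0 (GammaAux.dg μ) + Finsupp.single 1 (GammaAux.wt μ))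
            (Polynomial.C (coeff μ v) * GammaAux.Pmu μ) := by
        conv_lhs => rw [v.as_sum]
        rw [map_sum]
        exact Finset.sum_congr rfl fun μ _ => GammaAux.phi_monomial μ _
      have hiff : ∀ μ : Fin (d + 1) →₀ ℕ,
          ((Finsupp.single (0 : Fin 2) (GammaAux.dg μ) + Finsupp.single 1 (GammaAux.wt μ))
            = (Finsupp.single 0 (GammaAux.dg μ0) + Finsupp.single 1 (GammaAux.wt μ0)))
          ↔ (GammaAux.dg μ = GammaAux.dg μ0 ∧ GammaAux.wt μ = GammaAux.wt μ0) := by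
        intro μ
        constructor
        · intro h
          have h0 := DFunLike.congr_fun h (0 : Fin 2)
          have h1 := DFunLike.congr_fun h (1 : Fin 2)
          simp [Finsupp.single_apply] at h0 h1
          exact ⟨h0, h1⟩
        · rintro ⟨h1, h2⟩
          rw [h1, h2]
      have h0 : MvPolynomial.coeff (Finsupp.single (0 : Fin 2) (GammaAux.dg μ0)
          + Finsupp.single 1 (GammaAux.wt μ0)) (GammaAux.phi d v) = 0 := by
        rw [hφv, MvPolynomial.coeff_zero]
      rw [hexp, MvPolynomial.coeff_sum] at h0
      simp only [MvPolynomial.coeff_monomial] at h0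
      classical
      have h0' : (∑ μ ∈ v.support.filter
          (fun μ => GammaAux.dg μ = GammaAux.dg μ0 ∧ GammaAux.wt μ = GammaAux.wt μ0),
          Polynomial.C (coeff μ v) * GammaAux.Pmu μ) = 0 := by
        rw [Finset.sum_filter]
        rw [show (∑ μ ∈ v.support,
              if GammaAux.dg μ = GammaAux.dg μ0 ∧ GammaAux.wt μ = GammaAux.wt μ0
              then Polynomial.C (coeff μ v) * GammaAux.Pmu μ else 0)
            = ∑ μ ∈ v.support,
              if (Finsupp.single (0 : Fin 2) (GammaAux.dg μ) + Finsupp.single 1 (GammaAux.wt μ)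
                = Finsupp.single 0 (GammaAux.dg μ0) + Finsupp.single 1 (GammaAux.wt μ0))
              then Polynomial.C (coeff μ v) * GammaAux.Pmu μ else 0 from
          Finset.sum_congr rfl fun μ _ => if_congr (hiff μ).symm rfl rfl]
        exact h0
      have hKLres := GammaAux.KL (d := d) (by omega) (GammaAux.dg μ0) (GammaAux.wt μ0) _ _
        (fun μ hμ => by
          rw [Finset.mem_filter] at hμ
          exact ⟨hv μ hμ.1, hμ.2.1, hμ.2.2⟩) h0'
      exact hKLres μ0 (Finset.mem_filter.mpr ⟨hsupp, rfl, rfl⟩)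
    rw [hv0, zero_add]
    exact hh
  rw [hker]
  exact RingHom.ker_isPrime _
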